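/- Let q ∈ k^× with q ≠ −1 and let V = V_{3,q} be the braided vector space with basis x_0, x_1, x_2 (indices in Z/3) and braiding c(x_i ⊗ x_j) = q x_{−i−j} ⊗ x_i. If q is a primitive 6th root of unity, then the kernel of the quantum symmetrizer S² = id + c on V ⊗ V is 2-dimensional, spanned by x_0x_1 − q x_2x_0 + q² x_1x_2 and x_1x_0 − q x_2x_1 + q² x_0x_2 (writing x_i x_j for x_i ⊗ x_j). If q is a root of unity with N(q) ∉ {2, 6}, then ker(id + c) = 0. -/

import Mathlib

open TensorProduct

set_option maxHeartbeats 2000000 in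
/-- Let `q ∈ kˣ`, `q ≠ −1`, and `V = V_{3,q}` with basis `x_0, x_1, x_2` indexed by
`ℤ/3` (here `x_i = Pi.single i 1` in `V = ZMod 3 → k`) and braiding
`c(x_i ⊗ x_j) = q x_{−i−j} ⊗ x_i`. If `q` is a primitive 6th root of unity, then
`ker(id + c)` is 2-dimensional, spanned by `x_0x_1 − q x_2x_0 + q² x_1x_2` and
`x_1x_0 − q x_2x_1 + q² x_0x_2`. If `q` is a root of unity of order `∉ {2, 6}`, then
`ker(id + c) = 0`. -/
theorem stmt19 {k : Type*} [Field k] [IsAlgClosed k] [CharZero k] (q : k)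
    (hq0 : q ≠ 0) (hqm1 : q ≠ -1)
    (c : ((ZMod 3 → k) ⊗[k] (ZMod 3 → k)) →ₗ[k] ((ZMod 3 → k) ⊗[k] (ZMod 3 → k)))
    (hc : ∀ i j : ZMod 3,
      c ((Pi.single i 1 : ZMod 3 → k) ⊗ₜ[k] (Pi.single j 1 : ZMod 3 → k))
        = q • ((Pi.single (-i - j) 1 : ZMod 3 → k) ⊗ₜ[k] (Pi.single i 1 : ZMod 3 → k))) :
    (orderOf q = 6 →
      LinearMap.ker (LinearMap.id + c)
        = Submodule.span k
            {((Pi.single 0 1 : ZMod 3 → k) ⊗ₜ[k] (Pi.single 1 1 : ZMod 3 → k)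
                - q • ((Pi.single 2 1 : ZMod 3 → k) ⊗ₜ[k] (Pi.single 0 1 : ZMod 3 → k))
                + q ^ 2 • ((Pi.single 1 1 : ZMod 3 → k) ⊗ₜ[k] (Pi.single 2 1 : ZMod 3 → k))),
             ((Pi.single 1 1 : ZMod 3 → k) ⊗ₜ[k] (Pi.single 0 1 : ZMod 3 → k)
                - q • ((Pi.single 2 1 : ZMod 3 → k) ⊗ₜ[k] (Pi.single 1 1 : ZMod 3 → k))
                + q ^ 2 • ((Pi.single 0 1 : ZMod 3 → k) ⊗ₜ[k] (Pi.single 2 1 : ZMod 3 → k)))} ∧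
      Module.finrank k (LinearMap.ker (LinearMap.id + c)) = 2) ∧
    (orderOf q ≠ 0 → orderOf q ≠ 2 → orderOf q ≠ 6 →
      LinearMap.ker (LinearMap.id + c) = ⊥) := by
  obtain ⟨B, hB⟩ : ∃ B : Module.Basis (ZMod 3 × ZMod 3) k ((ZMod 3 → k) ⊗[k] (ZMod 3 → k)),
      ∀ p : ZMod 3 × ZMod 3,
        B p = (Pi.single p.1 1 : ZMod 3 → k) ⊗ₜ[k] (Pi.single p.2 1 : ZMod 3 → k) :=
    ⟨Module.Basis.tensorProduct (Pi.basisFun k (ZMod 3)) (Pi.basisFun k (ZMod 3)), fun p => by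
      rw [show p = (p.1, p.2) from rfl, Module.Basis.tensorProduct_apply, Pi.basisFun_apply,
        Pi.basisFun_apply]⟩
  have hcB : ∀ i j : ZMod 3, c (B (i, j)) = q • B (-i - j, i) := by
    intro i j; rw [hB (i, j), hB (-i - j, i)]; exact hc i j
  have key : ∀ (v : (ZMod 3 → k) ⊗[k] (ZMod 3 → k)) (r : ZMod 3 × ZMod 3),
      B.repr (c v) r = q * B.repr v (r.2, -r.1 - r.2) := by
    intro v r
    conv_lhs => rw [← B.sum_repr v, map_sum, map_sum]
    have hcB' : ∀ p : ZMod 3 × ZMod 3, c (B p) = q • B (-p.1 - p.2, p.1) := fun p => hcB p.1 p.2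
    simp only [map_smul, hcB', Module.Basis.repr_self, smul_smul]
    rw [Finsupp.finset_sum_apply]
    simp only [Finsupp.smul_apply, Finsupp.single_apply, smul_eq_mul]
    rw [Finset.sum_eq_single ((r.2, -r.1 - r.2) : ZMod 3 × ZMod 3)]
    · have : ((-(r.2) - (-r.1 - r.2), r.2) : ZMod 3 × ZMod 3) = r := by
        rw [Prod.ext_iff]; constructor <;> [ring; rfl]
      rw [if_pos this]; ring
    · intro p _ hp
      rw [if_neg, mul_zero]
      intro h
      apply hp
      rw [Prod.ext_iff] at h ⊢
      obtain ⟨h1, h2⟩ := h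
      exact ⟨by simpa using h2, by rw [← h1, ← h2]; ring⟩
    · intro h; exact absurd (Finset.mem_univ _) h
  have mem_iff : ∀ v : (ZMod 3 → k) ⊗[k] (ZMod 3 → k),
      v ∈ LinearMap.ker (LinearMap.id + c) ↔
        ∀ r : ZMod 3 × ZMod 3, B.repr v r + q * B.repr v (r.2, -r.1 - r.2) = 0 := by
    intro v
    rw [LinearMap.mem_ker, LinearMap.add_apply, LinearMap.id_apply,
      ← (B.repr.map_eq_zero_iff), Finsupp.ext_iff]
    constructor
    · intro h r; have := h r
      rwa [map_add, Finsupp.add_apply, key, Finsupp.coe_zero, Pi.zero_apply] at this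
    · intro h r; rw [map_add, Finsupp.add_apply, key, Finsupp.coe_zero, Pi.zero_apply]
      exact h r
  have expand : ∀ v : (ZMod 3 → k) ⊗[k] (ZMod 3 → k),
      v = B.repr v (0,0) • B (0,0) + B.repr v (0,1) • B (0,1) + B.repr v (0,2) • B (0,2)
        + (B.repr v (1,0) • B (1,0) + B.repr v (1,1) • B (1,1) + B.repr v (1,2) • B (1,2))
        + (B.repr v (2,0) • B (2,0) + B.repr v (2,1) • B (2,1) + B.repr v (2,2) • B (2,2)) := by
    intro v
    have h1 : v = ∑ i : ZMod 3, ∑ j : ZMod 3, B.repr v (i,j) • B (i,j) := by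
      conv_lhs => rw [← B.sum_repr v]
      exact Fintype.sum_prod_type _
    have e : ∀ f : ZMod 3 → ((ZMod 3 → k) ⊗[k] (ZMod 3 → k)),
        ∑ i : ZMod 3, f i = f 0 + f 1 + f 2 := fun f => Fin.sum_univ_three f
    refine h1.trans ?_
    rw [e, e, e, e]
  have hq1 : (1 : k) + q ≠ 0 := fun h => hqm1 (by linear_combination h)
  -- index normalizations
  have e00 : ((0 : ZMod 3), (-(0:ZMod 3) - 0 : ZMod 3)) = ((0,0) : ZMod 3 × ZMod 3) := by decide
  have e11 : ((1 : ZMod 3), (-(1:ZMod 3) - 1 : ZMod 3)) = ((1,1) : ZMod 3 × ZMod 3) := by decide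
  have e22 : ((2 : ZMod 3), (-(2:ZMod 3) - 2 : ZMod 3)) = ((2,2) : ZMod 3 × ZMod 3) := by decide
  have e01 : ((1 : ZMod 3), (-(0:ZMod 3) - 1 : ZMod 3)) = ((1,2) : ZMod 3 × ZMod 3) := by decide
  have e12 : ((2 : ZMod 3), (-(1:ZMod 3) - 2 : ZMod 3)) = ((2,0) : ZMod 3 × ZMod 3) := by decide
  have e20 : ((0 : ZMod 3), (-(2:ZMod 3) - 0 : ZMod 3)) = ((0,1) : ZMod 3 × ZMod 3) := by decide
  have e10 : ((0 : ZMod 3), (-(1:ZMod 3) - 0 : ZMod 3)) = ((0,2) : ZMod 3 × ZMod 3) := by decide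
  have e02 : ((2 : ZMod 3), (-(0:ZMod 3) - 2 : ZMod 3)) = ((2,1) : ZMod 3 × ZMod 3) := by decide
  have e21 : ((1 : ZMod 3), (-(2:ZMod 3) - 1 : ZMod 3)) = ((1,0) : ZMod 3 × ZMod 3) := by decide
  constructor
  · intro h6
    have hq3 : q ^ 3 = -1 := by
      have h1 : q ^ 6 = 1 := by rw [← h6]; exact pow_orderOf_eq_one q
      have h2 : (q ^ 3 - 1) * (q ^ 3 + 1) = 0 := by linear_combination h1
      rcases mul_eq_zero.mp h2 with h | h
      · exfalso
        have : orderOf q ∣ 3 := orderOf_dvd_of_pow_eq_one (by linear_combination h)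
        rw [h6] at this; norm_num at this
      · linear_combination h
    set s₁ : (ZMod 3 → k) ⊗[k] (ZMod 3 → k) :=
      (Pi.single 0 1 : ZMod 3 → k) ⊗ₜ[k] (Pi.single 1 1 : ZMod 3 → k)
        - q • ((Pi.single 2 1 : ZMod 3 → k) ⊗ₜ[k] (Pi.single 0 1 : ZMod 3 → k))
        + q ^ 2 • ((Pi.single 1 1 : ZMod 3 → k) ⊗ₜ[k] (Pi.single 2 1 : ZMod 3 → k)) with hs₁
    set s₂ : (ZMod 3 → k) ⊗[k] (ZMod 3 → k) :=
      (Pi.single 1 1 : ZMod 3 → k) ⊗ₜ[k] (Pi.single 0 1 : ZMod 3 → k)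
        - q • ((Pi.single 2 1 : ZMod 3 → k) ⊗ₜ[k] (Pi.single 1 1 : ZMod 3 → k))
        + q ^ 2 • ((Pi.single 0 1 : ZMod 3 → k) ⊗ₜ[k] (Pi.single 2 1 : ZMod 3 → k)) with hs₂
    have hs₁B : s₁ = B (0,1) - q • B (2,0) + q ^ 2 • B (1,2) := by
      rw [hs₁, hB (0,1), hB (2,0), hB (1,2)]
    have hs₂B : s₂ = B (1,0) - q • B (2,1) + q ^ 2 • B (0,2) := by
      rw [hs₂, hB (1,0), hB (2,1), hB (0,2)]
    -- coordinates of s₁, s₂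
    have r₁01 : B.repr s₁ (0,1) = 1 := by
      rw [hs₁B, map_add, map_sub, map_smul, map_smul, Module.Basis.repr_self, Module.Basis.repr_self,
        Module.Basis.repr_self, Finsupp.add_apply, Finsupp.sub_apply, Finsupp.smul_apply,
        Finsupp.smul_apply, Finsupp.single_eq_same,
        Finsupp.single_eq_of_ne (by decide), Finsupp.single_eq_of_ne (by decide)]
      simp
    have r₁10 : B.repr s₁ (1,0) = 0 := by
      rw [hs₁B, map_add, map_sub, map_smul, map_smul, Module.Basis.repr_self, Module.Basis.repr_self,
        Module.Basis.repr_self, Finsupp.add_apply, Finsupp.sub_apply, Finsupp.smul_apply,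
        Finsupp.smul_apply, Finsupp.single_eq_of_ne (by decide),
        Finsupp.single_eq_of_ne (by decide), Finsupp.single_eq_of_ne (by decide)]
      simp
    have r₂01 : B.repr s₂ (0,1) = 0 := by
      rw [hs₂B, map_add, map_sub, map_smul, map_smul, Module.Basis.repr_self, Module.Basis.repr_self,
        Module.Basis.repr_self, Finsupp.add_apply, Finsupp.sub_apply, Finsupp.smul_apply,
        Finsupp.smul_apply, Finsupp.single_eq_of_ne (by decide),
        Finsupp.single_eq_of_ne (by decide), Finsupp.single_eq_of_ne (by decide)]
      simp
    have r₂10 : B.repr s₂ (1,0) = 1 := by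
      rw [hs₂B, map_add, map_sub, map_smul, map_smul, Module.Basis.repr_self, Module.Basis.repr_self,
        Module.Basis.repr_self, Finsupp.add_apply, Finsupp.sub_apply, Finsupp.smul_apply,
        Finsupp.smul_apply, Finsupp.single_eq_same,
        Finsupp.single_eq_of_ne (by decide), Finsupp.single_eq_of_ne (by decide)]
      simp
    have hker : LinearMap.ker (LinearMap.id + c) = Submodule.span k {s₁, s₂} := by
      apply le_antisymm
      · intro v hv
        rw [mem_iff] at hv
        have h00 := hv (0,0); rw [e00] at h00
        have h11 := hv (1,1); rw [e11] at h11
        have h22 := hv (2,2); rw [e22] at h22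
        have h01 := hv (0,1); rw [e01] at h01
        have h12 := hv (1,2); rw [e12] at h12
        have h20 := hv (2,0); rw [e20] at h20
        have h10 := hv (1,0); rw [e10] at h10
        have h02 := hv (0,2); rw [e02] at h02
        have h21 := hv (2,1); rw [e21] at h21
        have z00 : B.repr v (0,0) = 0 := by
          rcases mul_eq_zero.mp (show (1 + q) * B.repr v (0,0) = 0 by linear_combination h00)
            with h | h
          exacts [absurd h hq1, h]
        have z11 : B.repr v (1,1) = 0 := by
          rcases mul_eq_zero.mp (show (1 + q) * B.repr v (1,1) = 0 by linear_combination h11)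
            with h | h
          exacts [absurd h hq1, h]
        have z22 : B.repr v (2,2) = 0 := by
          rcases mul_eq_zero.mp (show (1 + q) * B.repr v (2,2) = 0 by linear_combination h22)
            with h | h
          exacts [absurd h hq1, h]
        have z20 : B.repr v (2,0) = -q * B.repr v (0,1) := by linear_combination h20
        have z12 : B.repr v (1,2) = q ^ 2 * B.repr v (0,1) := by
          linear_combination h12 - q * h20
        have z21 : B.repr v (2,1) = -q * B.repr v (1,0) := by linear_combination h21
        have z02 : B.repr v (0,2) = q ^ 2 * B.repr v (1,0) := by
          linear_combination h02 - q * h21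
        rw [Submodule.mem_span_pair]
        refine ⟨B.repr v (0,1), B.repr v (1,0), ?_⟩
        rw [hs₁B, hs₂B]
        conv_rhs => rw [expand v]
        rw [z00, z11, z22, z20, z12, z21, z02]
        match_scalars <;> ring
      · rw [Submodule.span_le]
        have f01 : ((-(0:ZMod 3) - 1 : ZMod 3), (0 : ZMod 3)) = ((2,0) : ZMod 3 × ZMod 3) := by
          decide
        have f20 : ((-(2:ZMod 3) - 0 : ZMod 3), (2 : ZMod 3)) = ((1,2) : ZMod 3 × ZMod 3) := by
          decide
        have f12 : ((-(1:ZMod 3) - 2 : ZMod 3), (1 : ZMod 3)) = ((0,1) : ZMod 3 × ZMod 3) := by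
          decide
        have f10 : ((-(1:ZMod 3) - 0 : ZMod 3), (1 : ZMod 3)) = ((2,1) : ZMod 3 × ZMod 3) := by
          decide
        have f21 : ((-(2:ZMod 3) - 1 : ZMod 3), (2 : ZMod 3)) = ((0,2) : ZMod 3 × ZMod 3) := by
          decide
        have f02 : ((-(0:ZMod 3) - 2 : ZMod 3), (0 : ZMod 3)) = ((1,0) : ZMod 3 × ZMod 3) := by
          decide
        rintro x (rfl | rfl)
        · rw [SetLike.mem_coe, LinearMap.mem_ker, LinearMap.add_apply, LinearMap.id_apply,
            hs₁B, map_add, map_sub, map_smul, map_smul, hcB 0 1, hcB 2 0, hcB 1 2,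
            f01, f20, f12]
          match_scalars
          · linear_combination hq3
          · ring
          · ring
        · rw [SetLike.mem_coe, LinearMap.mem_ker, LinearMap.add_apply, LinearMap.id_apply,
            hs₂B, map_add, map_sub, map_smul, map_smul, hcB 1 0, hcB 2 1, hcB 0 2,
            f10, f21, f02]
          match_scalars
          · linear_combination hq3
          · ring
          · ring
    refine ⟨hker, ?_⟩
    rw [hker]
    have hli : LinearIndependent k ![s₁, s₂] := by
      rw [LinearIndependent.pair_iff]
      intro s t hst
      have h1 := congrArg (fun w => B.repr w ((0,1) : ZMod 3 × ZMod 3)) hst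
      have h2 := congrArg (fun w => B.repr w ((1,0) : ZMod 3 × ZMod 3)) hst
      simp only [map_add, map_smul, Finsupp.add_apply, Finsupp.smul_apply, smul_eq_mul,
        map_zero, Finsupp.coe_zero, Pi.zero_apply, r₁01, r₂01] at h1
      simp only [map_add, map_smul, Finsupp.add_apply, Finsupp.smul_apply, smul_eq_mul,
        map_zero, Finsupp.coe_zero, Pi.zero_apply, r₁10, r₂10] at h2
      exact ⟨by linear_combination h1, by linear_combination h2⟩
    have hrange : Set.range ![s₁, s₂] = {s₁, s₂} := by
      ext z
      simp only [Fin.exists_fin_two, Set.mem_range, Matrix.cons_val_zero, Matrix.cons_val_one,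
        Matrix.head_cons, Set.mem_insert_iff, Set.mem_singleton_iff]
      constructor
      · rintro (rfl | rfl) <;> tauto
      · rintro (rfl | rfl) <;> tauto
    rw [← hrange, finrank_span_eq_card hli]
    simp
  · intro hn0 hn2 hn6
    have hq3 : q ^ 3 ≠ -1 := by
      intro h
      have h6 : q ^ 6 = 1 := by
        rw [show (6 : ℕ) = 3 * 2 from rfl, pow_mul, h]; ring
      have hd : orderOf q ∣ 6 := orderOf_dvd_of_pow_eq_one h6
      have hle : orderOf q ≤ 6 := Nat.le_of_dvd (by norm_num) hd
      interval_cases hoq : orderOf q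
      · exact hn0 rfl
      · have hq1' : q = 1 := orderOf_eq_one_iff.mp hoq
        rw [hq1'] at h; norm_num at h
      · exact hn2 rfl
      · have h3 : q ^ 3 = 1 := by rw [← hoq]; exact pow_orderOf_eq_one q
        rw [h3] at h; norm_num at h
      · first
        | norm_num at hd
        | (rw [hoq] at hd; norm_num at hd)
      · first
        | norm_num at hd
        | (rw [hoq] at hd; norm_num at hd)
      · exact hn6 rfl
    have hq3' : (1 : k) + q ^ 3 ≠ 0 := fun h => hq3 (by linear_combination h)
    rw [Submodule.eq_bot_iff]
    intro v hv
    rw [mem_iff] at hv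
    have h00 := hv (0,0); rw [e00] at h00
    have h11 := hv (1,1); rw [e11] at h11
    have h22 := hv (2,2); rw [e22] at h22
    have h01 := hv (0,1); rw [e01] at h01
    have h12 := hv (1,2); rw [e12] at h12
    have h20 := hv (2,0); rw [e20] at h20
    have h10 := hv (1,0); rw [e10] at h10
    have h02 := hv (0,2); rw [e02] at h02
    have h21 := hv (2,1); rw [e21] at h21
    have z00 : B.repr v (0,0) = 0 := by
      rcases mul_eq_zero.mp (show (1 + q) * B.repr v (0,0) = 0 by linear_combination h00)
        with h | h
      exacts [absurd h hq1, h]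
    have z11 : B.repr v (1,1) = 0 := by
      rcases mul_eq_zero.mp (show (1 + q) * B.repr v (1,1) = 0 by linear_combination h11)
        with h | h
      exacts [absurd h hq1, h]
    have z22 : B.repr v (2,2) = 0 := by
      rcases mul_eq_zero.mp (show (1 + q) * B.repr v (2,2) = 0 by linear_combination h22)
        with h | h
      exacts [absurd h hq1, h]
    have z01 : B.repr v (0,1) = 0 := by
      rcases mul_eq_zero.mp (show (1 + q ^ 3) * B.repr v (0,1) = 0 by
        linear_combination h01 - q * h12 + q ^ 2 * h20) with h | h
      exacts [absurd h hq3', h]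
    have z20 : B.repr v (2,0) = 0 := by linear_combination h20 - q * z01
    have z12 : B.repr v (1,2) = 0 := by linear_combination h12 - q * z20
    have z10 : B.repr v (1,0) = 0 := by
      rcases mul_eq_zero.mp (show (1 + q ^ 3) * B.repr v (1,0) = 0 by
        linear_combination h10 - q * h02 + q ^ 2 * h21) with h | h
      exacts [absurd h hq3', h]
    have z21 : B.repr v (2,1) = 0 := by linear_combination h21 - q * z10
    have z02 : B.repr v (0,2) = 0 := by linear_combination h02 - q * z21
    have hv' := expand v
    rw [z00, z11, z22, z01, z20, z12, z10, z21, z02] at hv'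
    simp only [zero_smul, add_zero, zero_add] at hv'
    exact hv'
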